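/- (Proposition 3, perfect reconstruction of the sliCQ transform.) Let L, N ∈ ℕ with N ∣ L and 2N ≤ L. Let I_K be a finite index set and, for k ∈ I_K, let g_k, g̃_k ∈ ℂ^{2N} and M_k ∈ ℕ, M_k ≥ 1, such that the systems ψ_{n,k}[j] = e^{−2πi·jn/M_k}·g_k[j] and ψ̃_{n,k}[j] = e^{−2πi·jn/M_k}·g̃_k[j] (j ∈ ℤ/2Nℤ, n = 0,…,M_k−1) are dual on ℂ^{2N}, i.e. Σ_{k,n} ⟨h, ψ_{n,k}⟩·ψ̃_{n,k} = h for all h ∈ ℂ^{2N}. Let h₀, h̃₀ ∈ ℂ^L be such that the product h₀·conj(h̃₀) vanishes outside the 2N consecutive residues {−N, …, N−1} mod L and Σ_{m=0}^{L/N−1} (h₀·conj(h̃₀))[l − mN] = 1 for every l ∈ ℤ/Lℤ. For f ∈ ℂ^L, define the slices f^m ∈ ℂ^{2N} (m = 0,…,L/N−1) by f^m[j] = f[(j+(m−1)N) mod L]·h₀[(j−N) mod L], the slice coefficients c^m_{n,k} = ⟨(f^m)^, ψ_{n,k}⟩ (DFT and inner product on ℂ^{2N}), the reconstructed slices f̃^m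 = inverse DFT_{2N} of Σ_{k,n} c^m_{n,k}·ψ̃_{n,k}, and the sliCQ synthesis output f̃ ∈ ℂ^L by f̃[i] = Σ_{m=0}^{L/N−1} Σ_{j=0,…,2N−1 with j+(m−1)N ≡ i (mod L)} f̃^m[j]·conj(h̃₀[(j−N) mod L]). Then f̃ = f. -/

import Mathlib

/-- Inner product on ℂ^P: ⟨f,g⟩ = Σ_{l=0}^{P-1} f[l]·conj(g[l]). -/
noncomputable def ip (P : ℕ) (f g : ZMod P → ℂ) : ℂ :=
  ∑ l ∈ Finset.range P, f l * (starRingEnd ℂ) (g l)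

/-- Discrete Fourier transform on ℂ^P: f̂[j] = P^{-1/2}·Σ_{l=0}^{P-1} f[l]·e^{-2πi·lj/P}. -/
noncomputable def dft (P : ℕ) (f : ZMod P → ℂ) : ZMod P → ℂ :=
  fun j => ((Real.sqrt P : ℂ))⁻¹ *
    ∑ l ∈ Finset.range P, f l * Complex.exp (-(2 * Real.pi * Complex.I * (l : ℂ) * (j.val : ℂ)) / P)

/-- Inverse discrete Fourier transform on ℂ^P: ǧ[l] = P^{-1/2}·Σ_{j=0}^{P-1} g[j]·e^{2πi·lj/P}. -/
noncomputable def idft (P : ℕ) (g : ZMod P → ℂ) : ZMod P → ℂ :=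
  fun l => ((Real.sqrt P : ℂ))⁻¹ *
    ∑ j ∈ Finset.range P, g j * Complex.exp (2 * Real.pi * Complex.I * (l.val : ℂ) * (j : ℂ) / P)


open Finset Complex

lemma exp_geom_sum (P : ℕ) (hP : 0 < P) (a b : ℕ) (ha : a < P) (hb : b < P) :
    ∑ j ∈ Finset.range P,
      Complex.exp (2 * Real.pi * Complex.I * (((a : ℂ) - b) * j) / P)
      = if a = b then (P : ℂ) else 0 := by
  have hPC : (P : ℂ) ≠ 0 := Nat.cast_ne_zero.mpr hP.ne'
  by_cases hab : a = b
  · simp [hab]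
  · simp only [if_neg hab]
    set z : ℂ := Complex.exp (2 * Real.pi * Complex.I * ((a : ℂ) - b) / P) with hz
    have hterm : ∀ j ∈ Finset.range P,
        Complex.exp (2 * Real.pi * Complex.I * (((a : ℂ) - b) * j) / P) = z ^ j := by
      intro j _
      rw [hz, ← Complex.exp_nat_mul]
      ring_nf
    rw [Finset.sum_congr rfl hterm]
    have hzP : z ^ P = 1 := by
      rw [hz, ← Complex.exp_nat_mul]
      have heq : (P : ℂ) * (2 * Real.pi * Complex.I * ((a : ℂ) - b) / P)
          = ((((a : ℤ) - (b : ℤ)) : ℤ) : ℂ) * (2 * Real.pi * Complex.I) := by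
        push_cast; field_simp
      rw [heq, Complex.exp_int_mul_two_pi_mul_I]
    have hz1 : z ≠ 1 := by
      intro h
      rw [hz, Complex.exp_eq_one_iff] at h
      obtain ⟨n, hn⟩ := h
      have hpi : (Real.pi : ℂ) ≠ 0 := by
        exact_mod_cast Real.pi_ne_zero
      have h2 : (2 : ℂ) * Real.pi * Complex.I ≠ 0 := by
        simp [Complex.I_ne_zero, hpi]
      field_simp at hn
      have hcan : (2 * (Real.pi : ℂ) * Complex.I) * ((a : ℂ) - b)
          = (2 * (Real.pi : ℂ) * Complex.I) * (n * P) := by linear_combination (2 * (Real.pi : ℂ) * Complex.I) * hn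
      have hC : ((a : ℂ) - b) = n * P := mul_left_cancel₀ h2 hcan
      have hint : (a : ℤ) - b = n * P := by exact_mod_cast hC
      have hP' : (0:ℤ) < P := by exact_mod_cast hP
      have h1 : -(P:ℤ) < (a:ℤ) - b := by omega
      have h2' : (a:ℤ) - b < P := by omega
      have h3 : (a:ℤ) - b ≠ 0 := by omega
      rw [hint] at h1 h2' h3
      rcases lt_trichotomy n 0 with h|h|h
      · nlinarith
      · simp [h] at h3
      · nlinarith
    rw [geom_sum_eq hz1, hzP]
    simp

lemma dft_idft (P : ℕ) (hP : 0 < P) (f : ZMod P → ℂ) : idft P (dft P f) = f := by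
  haveI : NeZero P := ⟨hP.ne'⟩
  funext l
  have hsq : ((Real.sqrt P : ℂ))⁻¹ * ((Real.sqrt P : ℂ))⁻¹ = ((P : ℂ))⁻¹ := by
    rw [← mul_inv]
    congr 1
    rw [← Complex.ofReal_mul, Real.mul_self_sqrt (Nat.cast_nonneg P)]
    push_cast; ring
  simp only [idft, dft]
  have step1 : ∀ j ∈ Finset.range P,
      (((Real.sqrt P : ℂ))⁻¹ *
        ∑ l' ∈ Finset.range P, f l' *
          Complex.exp (-(2 * Real.pi * Complex.I * (l' : ℂ) * (((j : ZMod P)).val : ℂ)) / P)) *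
        Complex.exp (2 * Real.pi * Complex.I * (l.val : ℂ) * (j : ℂ) / P)
      = ((Real.sqrt P : ℂ))⁻¹ *
        ∑ l' ∈ Finset.range P, f l' *
          Complex.exp (2 * Real.pi * Complex.I * (((l.val : ℂ) - l') * j) / P) := by
    intro j hj
    rw [Finset.mem_range] at hj
    rw [ZMod.val_natCast_of_lt hj, mul_assoc, Finset.sum_mul]
    congr 1
    apply Finset.sum_congr rfl
    intro l' _
    rw [mul_assoc, ← Complex.exp_add]
    congr 2
    ring
  rw [Finset.sum_congr rfl step1, ← Finset.mul_sum, ← mul_assoc, hsq, Finset.sum_comm]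
  have step2 : ∀ l' ∈ Finset.range P,
      ∑ j ∈ Finset.range P, f l' *
        Complex.exp (2 * Real.pi * Complex.I * (((l.val : ℂ) - l') * j) / P)
      = if l.val = l' then f l' * P else 0 := by
    intro l' hl'
    rw [Finset.mem_range] at hl'
    rw [← Finset.mul_sum, exp_geom_sum P hP l.val l' (ZMod.val_lt l) hl']
    split <;> simp
  rw [Finset.sum_congr rfl step2, Finset.sum_ite_eq (Finset.range P) l.val (fun l' => f l' * P)]
  rw [if_pos (Finset.mem_range.mpr (ZMod.val_lt l))]
  rw [ZMod.natCast_val, ZMod.cast_id]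
  field_simp
  exact mul_div_cancel_left₀ (f l) (Nat.cast_ne_zero.mpr hP.ne')


/-- Proposition 3: perfect reconstruction of the sliCQ transform.  Dual NSG
systems on ℂ^{2N} for the slice transforms, together with slicing windows h₀, h̃₀ whose product
vanishes outside {-N,…,N-1} mod L and whose translates by multiples of N sum to 1, yield
perfect reconstruction of every f ∈ ℂ^L by slicing, CQ-NSGT analysis/synthesis on each slice,
and windowed overlap-add. -/
theorem slicq_stmt8 {L N : ℕ} (hL : 1 ≤ L) (hN : 1 ≤ N) (hNL : N ∣ L) (h2NL : 2 * N ≤ L)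
    {ι : Type*} [Fintype ι]
    (g gt : ι → ZMod (2 * N) → ℂ) (M : ι → ℕ) (hM : ∀ k, 1 ≤ M k)
    (ψ ψt : ι → ℕ → ZMod (2 * N) → ℂ)
    (hψ : ∀ k n (j : ZMod (2 * N)),
      ψ k n j = Complex.exp (-(2 * Real.pi * Complex.I * (j.val : ℂ) * (n : ℂ)) / (M k : ℂ)) * g k j)
    (hψt : ∀ k n (j : ZMod (2 * N)),
      ψt k n j = Complex.exp (-(2 * Real.pi * Complex.I * (j.val : ℂ) * (n : ℂ)) / (M k : ℂ)) * gt k j)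
    (hdual : ∀ h : ZMod (2 * N) → ℂ, ∀ j : ZMod (2 * N),
      ∑ k : ι, ∑ n ∈ Finset.range (M k), ip (2 * N) h (ψ k n) * ψt k n j = h j)
    (h0 ht0 : ZMod L → ℂ)
    (hsupp : ∀ l : ZMod L,
      l ∉ (Finset.range (2 * N)).image (fun i : ℕ => (i : ZMod L) - (N : ZMod L)) →
        h0 l * (starRingEnd ℂ) (ht0 l) = 0)
    (hpart : ∀ l : ZMod L,
      ∑ m ∈ Finset.range (L / N),
        h0 (l - ((m * N : ℕ) : ZMod L)) * (starRingEnd ℂ) (ht0 (l - ((m * N : ℕ) : ZMod L))) = 1)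
    (f : ZMod L → ℂ)
    -- the slices f^m[j] = f[j+(m-1)N]·h₀[j-N]
    (fs : ℕ → ZMod (2 * N) → ℂ)
    (hfs : ∀ (m : ℕ) (j : ZMod (2 * N)),
      fs m j = f ((j.val : ZMod L) + ((((m : ℤ) - 1) * (N : ℤ) : ℤ) : ZMod L)) *
        h0 ((j.val : ZMod L) - (N : ZMod L)))
    -- the slice coefficients c^m_{n,k} = ⟨(f^m)^, ψ_{n,k}⟩
    (c : ℕ → ι → ℕ → ℂ)
    (hc : ∀ m k n, c m k n = ip (2 * N) (dft (2 * N) (fs m)) (ψ k n))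
    -- the reconstructed slices f̃^m
    (ftld : ℕ → ZMod (2 * N) → ℂ)
    (hftld : ∀ m : ℕ,
      ftld m = idft (2 * N) (fun j => ∑ k : ι, ∑ n ∈ Finset.range (M k), c m k n * ψt k n j))
    -- the sliCQ synthesis output f̃ by windowed overlap-add
    (fout : ZMod L → ℂ)
    (hfout : ∀ i : ZMod L,
      fout i = ∑ m ∈ Finset.range (L / N),
        ∑ j ∈ (Finset.range (2 * N)).filter
            (fun j : ℕ => (j : ZMod L) + ((((m : ℤ) - 1) * (N : ℤ) : ℤ) : ZMod L) = i),
          ftld m (j : ZMod (2 * N)) * (starRingEnd ℂ) (ht0 ((j : ZMod L) - (N : ZMod L)))) :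
    fout = f := by
  have hN2 : 0 < 2 * N := by omega
  haveI : NeZero (2 * N) := ⟨hN2.ne'⟩
  haveI : NeZero L := ⟨by omega⟩
  -- Step 1: perfect reconstruction of each slice
  have hrec : ∀ m, ftld m = fs m := by
    intro m
    rw [hftld m]
    have hfun : (fun j => ∑ k : ι, ∑ n ∈ Finset.range (M k), c m k n * ψt k n j)
        = dft (2 * N) (fs m) := by
      funext j
      simp only [hc]
      exact hdual (dft (2 * N) (fs m)) j
    rw [hfun, dft_idft _ hN2]
  funext i
  rw [hfout i]
  -- Step 2: each slice contributes f i * W (i - mN)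
  have key : ∀ m ∈ Finset.range (L / N),
      ∑ j ∈ (Finset.range (2 * N)).filter
          (fun j : ℕ => (j : ZMod L) + ((((m : ℤ) - 1) * (N : ℤ) : ℤ) : ZMod L) = i),
        ftld m (j : ZMod (2 * N)) * (starRingEnd ℂ) (ht0 ((j : ZMod L) - (N : ZMod L)))
      = f i * (h0 (i - ((m * N : ℕ) : ZMod L)) *
          (starRingEnd ℂ) (ht0 (i - ((m * N : ℕ) : ZMod L)))) := by
    intro m _
    set A : ZMod L := ((((m : ℤ) - 1) * (N : ℤ) : ℤ) : ZMod L) with hA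
    have hAN : A + (N : ZMod L) = ((m * N : ℕ) : ZMod L) := by
      rw [hA]; push_cast; ring
    rcases Finset.eq_empty_or_nonempty
        ((Finset.range (2 * N)).filter (fun j : ℕ => (j : ZMod L) + A = i)) with he | hne
    · rw [he, Finset.sum_empty]
      have hz : h0 (i - ((m * N : ℕ) : ZMod L)) *
          (starRingEnd ℂ) (ht0 (i - ((m * N : ℕ) : ZMod L))) = 0 := by
        apply hsupp
        intro hmem
        rw [Finset.mem_image] at hmem
        obtain ⟨jj, hjj, hjjeq⟩ := hmem
        have hjmem : jj ∈ (Finset.range (2 * N)).filter (fun j : ℕ => (j : ZMod L) + A = i) := by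
          rw [Finset.mem_filter]
          refine ⟨hjj, ?_⟩
          linear_combination hjjeq + hAN
        rw [he] at hjmem
        exact absurd hjmem (Finset.notMem_empty jj)
      rw [hz, mul_zero]
    · obtain ⟨j₀, hj₀⟩ := hne
      have hsingle : (Finset.range (2 * N)).filter (fun j : ℕ => (j : ZMod L) + A = i) = {j₀} := by
        apply Finset.eq_singleton_iff_unique_mem.mpr
        refine ⟨hj₀, ?_⟩
        intro j hj
        rw [Finset.mem_filter] at hj hj₀
        have hcast : (j : ZMod L) = (j₀ : ZMod L) :=
          add_right_cancel (hj.2.trans hj₀.2.symm)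
        have := congrArg ZMod.val hcast
        rwa [ZMod.val_natCast_of_lt (lt_of_lt_of_le (Finset.mem_range.mp hj.1) h2NL),
          ZMod.val_natCast_of_lt (lt_of_lt_of_le (Finset.mem_range.mp hj₀.1) h2NL)] at this
      rw [hsingle, Finset.sum_singleton, hrec m, hfs m]
      rw [Finset.mem_filter, Finset.mem_range] at hj₀
      obtain ⟨hj₀lt, hj₀eq⟩ := hj₀
      have hval : ((j₀ : ZMod (2 * N)).val : ZMod L) = (j₀ : ZMod L) := by
        rw [ZMod.val_natCast_of_lt hj₀lt]
      rw [hval, ← hA, hj₀eq]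
      have hsub : (j₀ : ZMod L) - (N : ZMod L) = i - ((m * N : ℕ) : ZMod L) := by
        linear_combination hj₀eq - hAN
      rw [hsub, mul_assoc]
  rw [Finset.sum_congr rfl key, ← Finset.mul_sum, hpart i, mul_one]
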